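/- Linear conflict plus Manhattan distance is admissible for the sliding-tile puzzle: for any solvable configuration, MD(s) + 2·LC(s) is a lower bound on the number of moves needed to reach the goal configuration, where LC(s) counts linear conflicts. -/

import Mathlib

variable {n : ℕ}

/-- Manhattan distance between two cells of an `n × n` board. -/
def mdist (p q : Fin n × Fin n) : ℕ :=
  Nat.dist p.1.val q.1.val + Nat.dist p.2.val q.2.val

/-- A legal move with blank tile `b`: swap the blank with an orthogonally
adjacent tile. A state is a bijection sending each cell to the tile occupying it,
tiles being named by their goal cell; the goal state is `Equiv.refl`. -/
def Move (b : Fin n × Fin n) (s s' : Equiv.Perm (Fin n × Fin n)) : Prop :=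
  ∃ p q, mdist p q = 1 ∧ s p = b ∧ s' = (Equiv.swap p q).trans s

/-- Sum over non-blank tiles of the Manhattan distance to their goal cells. -/
def MD (b : Fin n × Fin n) (s : Equiv.Perm (Fin n × Fin n)) : ℕ :=
  ∑ p : Fin n × Fin n, if s p = b then 0 else mdist p (s p)

/-- Columns `j < k` of row `r` hold a linear conflict: both tiles are non-blank,
both have their goal in row `r`, and their goal columns are in reversed order. -/
def RowConf (b : Fin n × Fin n) (s : Equiv.Perm (Fin n × Fin n))
    (r j k : Fin n) : Prop :=
  j < k ∧ s (r, j) ≠ b ∧ s (r, k) ≠ b ∧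
    (s (r, j)).1 = r ∧ (s (r, k)).1 = r ∧ (s (r, k)).2 < (s (r, j)).2

/-- Rows `j < k` of column `cc` hold a linear conflict. -/
def ColConf (b : Fin n × Fin n) (s : Equiv.Perm (Fin n × Fin n))
    (cc j k : Fin n) : Prop :=
  j < k ∧ s (j, cc) ≠ b ∧ s (k, cc) ≠ b ∧
    (s (j, cc)).2 = cc ∧ (s (k, cc)).2 = cc ∧ (s (k, cc)).1 < (s (j, cc)).1

/-- Linear-conflict count of a row: the least number of tiles that must be removed
from the row so that no conflict remains (the number of required extra detours). -/
noncomputable def lcRow (b : Fin n × Fin n) (s : Equiv.Perm (Fin n × Fin n))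
    (r : Fin n) : ℕ :=
  sInf {m | ∃ R : Finset (Fin n), R.card = m ∧
    ∀ j k, RowConf b s r j k → j ∈ R ∨ k ∈ R}

/-- Linear-conflict count of a column. -/
noncomputable def lcCol (b : Fin n × Fin n) (s : Equiv.Perm (Fin n × Fin n))
    (cc : Fin n) : ℕ :=
  sInf {m | ∃ R : Finset (Fin n), R.card = m ∧
    ∀ j k, ColConf b s cc j k → j ∈ R ∨ k ∈ R}

/-- Total linear-conflict count. -/
noncomputable def LC (b : Fin n × Fin n) (s : Equiv.Perm (Fin n × Fin n)) : ℕ :=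
  (∑ r : Fin n, lcRow b s r) + (∑ cc : Fin n, lcCol b s cc)


lemma lcRow_le (b : Fin n × Fin n) (s : Equiv.Perm (Fin n × Fin n)) (r : Fin n)
    {R : Finset (Fin n)} (h : ∀ j k, RowConf b s r j k → j ∈ R ∨ k ∈ R) :
    lcRow b s r ≤ R.card := Nat.sInf_le ⟨R, rfl, h⟩

lemma lcCol_le (b : Fin n × Fin n) (s : Equiv.Perm (Fin n × Fin n)) (c : Fin n)
    {R : Finset (Fin n)} (h : ∀ j k, ColConf b s c j k → j ∈ R ∨ k ∈ R) :
    lcCol b s c ≤ R.card := Nat.sInf_le ⟨R, rfl, h⟩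

lemma lcRow_witness (b : Fin n × Fin n) (s : Equiv.Perm (Fin n × Fin n)) (r : Fin n) :
    ∃ R : Finset (Fin n), R.card = lcRow b s r ∧
      ∀ j k, RowConf b s r j k → j ∈ R ∨ k ∈ R := by
  have h : ({m | ∃ R : Finset (Fin n), R.card = m ∧
      ∀ j k, RowConf b s r j k → j ∈ R ∨ k ∈ R} : Set ℕ).Nonempty :=
    ⟨Finset.univ.card, Finset.univ, rfl, fun j _ _ => Or.inl (Finset.mem_univ j)⟩
  exact Nat.sInf_mem h

lemma lcCol_witness (b : Fin n × Fin n) (s : Equiv.Perm (Fin n × Fin n)) (c : Fin n) :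
    ∃ R : Finset (Fin n), R.card = lcCol b s c ∧
      ∀ j k, ColConf b s c j k → j ∈ R ∨ k ∈ R := by
  have h : ({m | ∃ R : Finset (Fin n), R.card = m ∧
      ∀ j k, ColConf b s c j k → j ∈ R ∨ k ∈ R} : Set ℕ).Nonempty :=
    ⟨Finset.univ.card, Finset.univ, rfl, fun j _ _ => Or.inl (Finset.mem_univ j)⟩
  exact Nat.sInf_mem h

lemma swap_lt {c1 c2 j k : Fin n} (h : Nat.dist c1.val c2.val = 1)
    (hj : j ≠ c2) (hk : k ≠ c2) (hjk : j < k) :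
    Equiv.swap c1 c2 j < Equiv.swap c1 c2 k := by
  have hd : c1.val = c2.val + 1 ∨ c2.val = c1.val + 1 := by
    unfold Nat.dist at h; omega
  have hj' : j.val ≠ c2.val := fun e => hj (Fin.ext e)
  have hk' : k.val ≠ c2.val := fun e => hk (Fin.ext e)
  rcases eq_or_ne j c1 with hj1 | hj1 <;> rcases eq_or_ne k c1 with hk1 | hk1
  · exact absurd (hj1.trans hk1.symm) (ne_of_lt hjk)
  · have hk1' : k.val ≠ c1.val := fun e => hk1 (Fin.ext e)
    have ej : j.val = c1.val := congrArg Fin.val hj1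
    rw [hj1, Equiv.swap_apply_left, Equiv.swap_apply_of_ne_of_ne hk1 hk]
    rw [Fin.lt_def] at hjk ⊢; omega
  · have hj1' : j.val ≠ c1.val := fun e => hj1 (Fin.ext e)
    have ek : k.val = c1.val := congrArg Fin.val hk1
    rw [hk1, Equiv.swap_apply_of_ne_of_ne hj1 hj, Equiv.swap_apply_left]
    rw [Fin.lt_def] at hjk ⊢; omega
  · rw [Equiv.swap_apply_of_ne_of_ne hj1 hj, Equiv.swap_apply_of_ne_of_ne hk1 hk]
    exact hjk

lemma swap_row (r c1 c2 c : Fin n) (h : c1 ≠ c2) :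
    Equiv.swap ((r, c1) : Fin n × Fin n) (r, c2) (r, c) = (r, Equiv.swap c1 c2 c) := by
  rcases eq_or_ne c c1 with rfl | h1
  · simp
  rcases eq_or_ne c c2 with rfl | h2
  · simp [Equiv.swap_apply_right, h.symm]
  · rw [Equiv.swap_apply_of_ne_of_ne (by simp [Prod.ext_iff, h1]) (by simp [Prod.ext_iff, h2]),
      Equiv.swap_apply_of_ne_of_ne h1 h2]

lemma MD_step (b p q : Fin n × Fin n) (s : Equiv.Perm (Fin n × Fin n))
    (hpq : p ≠ q) (hb : s p = b) :
    MD b s + mdist p (s q) = MD b ((Equiv.swap p q).trans s) + mdist q (s q) := by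
  classical
  set s' := (Equiv.swap p q).trans s with hs'
  have hqb : s q ≠ b := fun e => hpq (s.injective (hb.trans e.symm))
  have hne : ∀ x, x ≠ p → x ≠ q → s' x = s x := fun x h1 h2 => by
    simp [hs', Equiv.swap_apply_of_ne_of_ne h1 h2]
  have split : ∀ (g : Fin n × Fin n → ℕ) (a c : Fin n × Fin n), a ≠ c → g a = 0 →
      ∑ x, g x = g c + ∑ x ∈ (Finset.univ.erase c).erase a, g x := by
    intro g a c hac hg
    rw [← Finset.add_sum_erase _ g (Finset.mem_univ c)]
    congr 1
    rw [← Finset.add_sum_erase _ g (Finset.mem_erase.mpr ⟨hac, Finset.mem_univ a⟩), hg, zero_add]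
  have e1 : MD b s = mdist q (s q) + ∑ x ∈ (Finset.univ.erase q).erase p,
      (if s x = b then 0 else mdist x (s x)) := by
    rw [MD, split _ p q hpq (by simp [hb]), if_neg hqb]
  have e2 : MD b s' = mdist p (s q) + ∑ x ∈ (Finset.univ.erase p).erase q,
      (if s' x = b then 0 else mdist x (s' x)) := by
    have h1 : s' q = b := by simp [hs', hb]
    have h2 : s' p = s q := by simp [hs']
    rw [MD, split _ q p hpq.symm (by simp [h1]), if_neg (h2 ▸ hqb), h2]
  have e3 : ∑ x ∈ (Finset.univ.erase p).erase q, (if s' x = b then 0 else mdist x (s' x))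
      = ∑ x ∈ (Finset.univ.erase q).erase p, (if s x = b then 0 else mdist x (s x)) := by
    rw [Finset.erase_right_comm]
    refine Finset.sum_congr rfl fun x hx => ?_
    have hxp : x ≠ p := (Finset.mem_erase.mp hx).1
    have hxq : x ≠ q := (Finset.mem_erase.mp (Finset.mem_erase.mp hx).2).1
    rw [hne x hxp hxq]
  rw [e1, e2, e3]
  omega

lemma step_h (b : Fin n × Fin n) (s : Equiv.Perm (Fin n × Fin n)) (r c1 c2 : Fin n)
    (hd : Nat.dist c1.val c2.val = 1) (hb : s (r, c1) = b) :
    MD b s + 2 * LC b s ≤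
      MD b ((Equiv.swap ((r, c1) : Fin n × Fin n) (r, c2)).trans s)
        + 2 * LC b ((Equiv.swap ((r, c1) : Fin n × Fin n) (r, c2)).trans s) + 1 := by
  classical
  have hc12 : c1 ≠ c2 := by
    intro e; rw [e, Nat.dist_self] at hd; omega
  have hpq : ((r, c1) : Fin n × Fin n) ≠ (r, c2) := by simp [Prod.ext_iff, hc12]
  set s' := (Equiv.swap ((r, c1) : Fin n × Fin n) (r, c2)).trans s with hs'
  set t := s (r, c2) with ht
  have htb : t ≠ b := fun e => hpq (s.injective (hb.trans e.symm))
  have hval : ∀ x, x ≠ (r, c1) → x ≠ (r, c2) → s' x = s x := fun x h1 h2 => by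
    simp [hs', Equiv.swap_apply_of_ne_of_ne h1 h2]
  have hrow : ∀ c, s' (r, c) = s (r, Equiv.swap c1 c2 c) := fun c => by
    show s (Equiv.swap _ _ (r, c)) = _
    rw [swap_row r c1 c2 c hc12]
  -- row bound
  have hA : ∀ rr, lcRow b s rr ≤ lcRow b s' rr := by
    intro rr
    obtain ⟨R', hcard, hcov⟩ := lcRow_witness b s' rr
    rcases eq_or_ne rr r with h | hrr
    · subst h
      calc lcRow b s rr ≤ (R'.image (Equiv.swap c1 c2)).card := by
            apply lcRow_le
            intro j k hc
            obtain ⟨hjk, hjb, hkb, hgj, hgk, hord⟩ := hc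
            have hj1 : j ≠ c1 := fun e => hjb (by rw [e]; exact hb)
            have hk1 : k ≠ c1 := fun e => hkb (by rw [e]; exact hb)
            have hσ : Equiv.swap c1 c2 j < Equiv.swap c1 c2 k := by
              rw [Equiv.swap_comm]
              exact swap_lt (by rw [Nat.dist_comm]; exact hd) hj1 hk1 hjk
            have ej : s' (rr, Equiv.swap c1 c2 j) = s (rr, j) := by
              rw [hrow, Equiv.swap_apply_self]
            have ek : s' (rr, Equiv.swap c1 c2 k) = s (rr, k) := by
              rw [hrow, Equiv.swap_apply_self]
            have hc' : RowConf b s' rr (Equiv.swap c1 c2 j) (Equiv.swap c1 c2 k) :=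
              ⟨hσ, by rw [ej]; exact hjb, by rw [ek]; exact hkb,
                by rw [ej]; exact hgj, by rw [ek]; exact hgk, by rw [ej, ek]; exact hord⟩
            rcases hcov _ _ hc' with h | h
            · exact Or.inl (Finset.mem_image.mpr ⟨_, h, Equiv.swap_apply_self _ _ _⟩)
            · exact Or.inr (Finset.mem_image.mpr ⟨_, h, Equiv.swap_apply_self _ _ _⟩)
        _ ≤ R'.card := Finset.card_image_le
        _ = lcRow b s' rr := hcard
    · calc lcRow b s rr ≤ R'.card := by
            apply lcRow_le
            intro j k hc
            apply hcov
            obtain ⟨hjk, hjb, hkb, hgj, hgk, hord⟩ := hc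
            have ej : s' (rr, j) = s (rr, j) :=
              hval _ (by simp [Prod.ext_iff, hrr]) (by simp [Prod.ext_iff, hrr])
            have ek : s' (rr, k) = s (rr, k) :=
              hval _ (by simp [Prod.ext_iff, hrr]) (by simp [Prod.ext_iff, hrr])
            exact ⟨hjk, by rw [ej]; exact hjb, by rw [ek]; exact hkb,
              by rw [ej]; exact hgj, by rw [ek]; exact hgk, by rw [ej, ek]; exact hord⟩
        _ = lcRow b s' rr := hcard
  -- column bound
  have hB : ∀ c, (lcCol b s c ≤ lcCol b s' c + 1) ∧
      (¬(c = c2 ∧ t.2 = c2) → lcCol b s c ≤ lcCol b s' c) := by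
    intro c
    obtain ⟨R', hcard, hcov⟩ := lcCol_witness b s' c
    have transfer : ∀ j k, ColConf b s c j k →
        ColConf b s' c j k ∨ ((j = r ∨ k = r) ∧ c = c2 ∧ t.2 = c2) := by
      intro j k hc
      obtain ⟨hjk, hjb, hkb, hgj, hgk, hord⟩ := hc
      by_cases hjq : ((j, c) : Fin n × Fin n) = (r, c2)
      · right
        have hcc : c = c2 := congrArg Prod.snd hjq
        refine ⟨Or.inl (congrArg Prod.fst hjq), hcc, ?_⟩
        have : t = s (j, c) := by rw [ht, ← hjq]
        rw [this, hgj, hcc]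
      by_cases hkq : ((k, c) : Fin n × Fin n) = (r, c2)
      · right
        have hcc : c = c2 := congrArg Prod.snd hkq
        refine ⟨Or.inr (congrArg Prod.fst hkq), hcc, ?_⟩
        have : t = s (k, c) := by rw [ht, ← hkq]
        rw [this, hgk, hcc]
      · left
        have hjp : ((j, c) : Fin n × Fin n) ≠ (r, c1) := fun e => hjb (by rw [e]; exact hb)
        have hkp : ((k, c) : Fin n × Fin n) ≠ (r, c1) := fun e => hkb (by rw [e]; exact hb)
        have ej : s' (j, c) = s (j, c) := hval _ hjp hjq
        have ek : s' (k, c) = s (k, c) := hval _ hkp hkq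
        exact ⟨hjk, by rw [ej]; exact hjb, by rw [ek]; exact hkb,
          by rw [ej]; exact hgj, by rw [ek]; exact hgk, by rw [ej, ek]; exact hord⟩
    constructor
    · calc lcCol b s c ≤ (insert r R').card := by
            apply lcCol_le
            intro j k hc
            rcases transfer j k hc with h | ⟨hjr | hkr, -, -⟩
            · rcases hcov _ _ h with h' | h'
              · exact Or.inl (Finset.mem_insert_of_mem h')
              · exact Or.inr (Finset.mem_insert_of_mem h')
            · exact Or.inl (by rw [hjr]; exact Finset.mem_insert_self r R')
            · exact Or.inr (by rw [hkr]; exact Finset.mem_insert_self r R')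
        _ ≤ R'.card + 1 := Finset.card_insert_le _ _
        _ = lcCol b s' c + 1 := by rw [hcard]
    · intro hno
      calc lcCol b s c ≤ R'.card := by
            apply lcCol_le
            intro j k hc
            rcases transfer j k hc with h | ⟨-, h2, h3⟩
            · exact hcov _ _ h
            · exact absurd ⟨h2, h3⟩ hno
        _ = lcCol b s' c := hcard
  have h1 : ∑ rr, lcRow b s rr ≤ ∑ rr, lcRow b s' rr :=
    Finset.sum_le_sum fun rr _ => hA rr
  have hMD := MD_step b (r, c1) (r, c2) s hpq hb
  rw [← ht, ← hs'] at hMD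
  by_cases ht2 : t.2 = c2
  · have h2 : ∑ c, lcCol b s c ≤ (∑ c, lcCol b s' c) + 1 := by
      rw [← Finset.add_sum_erase _ _ (Finset.mem_univ c2),
        ← Finset.add_sum_erase _ (fun c => lcCol b s' c) (Finset.mem_univ c2)]
      have hrest : ∑ c ∈ Finset.univ.erase c2, lcCol b s c ≤
          ∑ c ∈ Finset.univ.erase c2, lcCol b s' c :=
        Finset.sum_le_sum fun c hcmem => (hB c).2 fun h => (Finset.mem_erase.mp hcmem).1 h.1
      have := (hB c2).1
      omega
    have hm : mdist ((r, c1) : Fin n × Fin n) t = mdist (r, c2) t + 1 := by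
      have e2 : t.2.val = c2.val := congrArg Fin.val ht2
      simp only [mdist, Nat.dist] at hd ⊢
      omega
    have hLC : LC b s ≤ LC b s' + 1 := by
      simp only [LC]; omega
    simp only [LC] at *
    omega
  · have h2 : ∑ c, lcCol b s c ≤ ∑ c, lcCol b s' c :=
      Finset.sum_le_sum fun c _ => (hB c).2 fun h => ht2 h.2
    have hm : mdist ((r, c2) : Fin n × Fin n) t ≤ mdist (r, c1) t + 1 := by
      simp only [mdist, Nat.dist] at hd ⊢
      omega
    simp only [LC] at *
    omega

def tp (s : Equiv.Perm (Fin n × Fin n)) : Equiv.Perm (Fin n × Fin n) :=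
  ((Equiv.prodComm (Fin n) (Fin n)).trans s).trans (Equiv.prodComm (Fin n) (Fin n))

lemma tp_apply (s : Equiv.Perm (Fin n × Fin n)) (x : Fin n × Fin n) :
    tp s x = Prod.swap (s (Prod.swap x)) := rfl

lemma mdist_swap (p q : Fin n × Fin n) : mdist (Prod.swap p) (Prod.swap q) = mdist p q := by
  simp [mdist, Nat.add_comm]

lemma MD_tp (b : Fin n × Fin n) (s : Equiv.Perm (Fin n × Fin n)) :
    MD (Prod.swap b) (tp s) = MD b s := by
  unfold MD
  refine Fintype.sum_equiv (Equiv.prodComm (Fin n) (Fin n)) _ _ fun x => ?_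
  have hm : mdist x (Prod.swap (s (Prod.swap x))) = mdist (Prod.swap x) (s (Prod.swap x)) := by
    conv_lhs => rw [← Prod.swap_swap x]
    exact mdist_swap _ _
  have hcond : ((s (Prod.swap x)).swap = b.swap) = (s (Prod.swap x) = b) := propext Prod.swap_inj
  simp only [tp_apply, Equiv.prodComm_apply, hcond, hm]
  exact if_congr Iff.rfl rfl rfl

lemma conf_tp (b : Fin n × Fin n) (s : Equiv.Perm (Fin n × Fin n)) (cc j k : Fin n) :
    RowConf (Prod.swap b) (tp s) cc j k ↔ ColConf b s cc j k := by
  unfold RowConf ColConf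
  simp only [tp_apply, Prod.swap_prod_mk, Prod.fst_swap, Prod.snd_swap, ne_eq, Prod.swap_inj]

lemma conf_tp' (b : Fin n × Fin n) (s : Equiv.Perm (Fin n × Fin n)) (cc j k : Fin n) :
    ColConf (Prod.swap b) (tp s) cc j k ↔ RowConf b s cc j k := by
  unfold RowConf ColConf
  simp only [tp_apply, Prod.swap_prod_mk, Prod.fst_swap, Prod.snd_swap, ne_eq, Prod.swap_inj]

lemma lcRow_tp (b : Fin n × Fin n) (s : Equiv.Perm (Fin n × Fin n)) (r : Fin n) :
    lcRow (Prod.swap b) (tp s) r = lcCol b s r := by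
  unfold lcRow lcCol
  congr 1
  ext m
  simp only [Set.mem_setOf_eq]
  constructor <;> rintro ⟨R, h1, h2⟩
  · exact ⟨R, h1, fun j k hc => h2 j k ((conf_tp b s r j k).mpr hc)⟩
  · exact ⟨R, h1, fun j k hc => h2 j k ((conf_tp b s r j k).mp hc)⟩

lemma lcCol_tp (b : Fin n × Fin n) (s : Equiv.Perm (Fin n × Fin n)) (c : Fin n) :
    lcCol (Prod.swap b) (tp s) c = lcRow b s c := by
  unfold lcRow lcCol
  congr 1
  ext m
  simp only [Set.mem_setOf_eq]
  constructor <;> rintro ⟨R, h1, h2⟩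
  · exact ⟨R, h1, fun j k hc => h2 j k ((conf_tp' b s c j k).mpr hc)⟩
  · exact ⟨R, h1, fun j k hc => h2 j k ((conf_tp' b s c j k).mp hc)⟩

lemma LC_tp (b : Fin n × Fin n) (s : Equiv.Perm (Fin n × Fin n)) :
    LC (Prod.swap b) (tp s) = LC b s := by
  simp only [LC, lcRow_tp, lcCol_tp]
  exact add_comm _ _

lemma tp_swap_trans (a b c d : Fin n) (s : Equiv.Perm (Fin n × Fin n)) :
    tp ((Equiv.swap ((a, b) : Fin n × Fin n) (c, d)).trans s)
      = (Equiv.swap ((b, a) : Fin n × Fin n) (d, c)).trans (tp s) := by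
  apply Equiv.ext
  intro x
  show Prod.swap (s (Equiv.swap (a, b) (c, d) (Prod.swap x)))
      = Prod.swap (s (Prod.swap (Equiv.swap ((b, a) : Fin n × Fin n) (d, c) x)))
  congr 2
  rcases eq_or_ne x (b, a) with rfl | h1
  · rw [Equiv.swap_apply_left]
    show Equiv.swap ((a, b) : Fin n × Fin n) (c, d) (a, b) = (c, d)
    exact Equiv.swap_apply_left _ _
  rcases eq_or_ne x (d, c) with rfl | h2
  · rw [Equiv.swap_apply_right]
    show Equiv.swap ((a, b) : Fin n × Fin n) (c, d) (c, d) = (a, b)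
    exact Equiv.swap_apply_right _ _
  · rw [Equiv.swap_apply_of_ne_of_ne h1 h2]
    rw [Equiv.swap_apply_of_ne_of_ne (fun e => h1 ?_) (fun e => h2 ?_)]
    · exact congrArg Prod.swap e
    · exact congrArg Prod.swap e

lemma step (b : Fin n × Fin n) (s s' : Equiv.Perm (Fin n × Fin n)) (h : Move b s s') :
    MD b s + 2 * LC b s ≤ MD b s' + 2 * LC b s' + 1 := by
  obtain ⟨p, q, hdist, hb, rfl⟩ := h
  obtain ⟨p1, p2⟩ := p
  obtain ⟨q1, q2⟩ := q
  have hcase : (p1 = q1 ∧ Nat.dist p2.val q2.val = 1) ∨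
      (p2 = q2 ∧ Nat.dist p1.val q1.val = 1) := by
    have hdist' : Nat.dist p1.val q1.val + Nat.dist p2.val q2.val = 1 := hdist
    have : Nat.dist p1.val q1.val = 0 ∨ Nat.dist p2.val q2.val = 0 := by omega
    rcases this with h | h
    · exact Or.inl ⟨Fin.ext (Nat.eq_of_dist_eq_zero h), by omega⟩
    · exact Or.inr ⟨Fin.ext (Nat.eq_of_dist_eq_zero h), by omega⟩

  rcases hcase with ⟨h1, h2⟩ | ⟨h1, h2⟩
  · subst h1
    exact step_h b s p1 p2 q2 h2 hb
  · subst h1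
    have hbt : tp s (p2, p1) = Prod.swap b := by
      rw [tp_apply]
      show Prod.swap (s (p1, p2)) = Prod.swap b
      rw [hb]
    have key := step_h (Prod.swap b) (tp s) p2 p1 q1 h2 hbt
    rw [← tp_swap_trans p1 p2 q1 p2 s] at key
    rw [MD_tp, LC_tp, MD_tp, LC_tp] at key
    exact key

lemma MD_refl (b : Fin n × Fin n) : MD b (Equiv.refl (Fin n × Fin n)) = 0 := by
  simp [MD, mdist, Nat.dist_self]

lemma LC_refl (b : Fin n × Fin n) : LC b (Equiv.refl (Fin n × Fin n)) = 0 := by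
  have hr : ∀ r, lcRow b (Equiv.refl (Fin n × Fin n)) r = 0 := fun r => Nat.le_zero.mp <| by
    have := lcRow_le b (Equiv.refl _) r (R := (∅ : Finset (Fin n)))
      (fun j k hc => (hc.1.not_gt hc.2.2.2.2.2).elim)
    simpa using this
  have hc : ∀ c, lcCol b (Equiv.refl (Fin n × Fin n)) c = 0 := fun c => Nat.le_zero.mp <| by
    have := lcCol_le b (Equiv.refl _) c (R := (∅ : Finset (Fin n)))
      (fun j k hc => (hc.1.not_gt hc.2.2.2.2.2).elim)
    simpa using this
  simp [LC, hr, hc]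


/-- Admissibility of Manhattan distance plus linear conflicts: for any solvable
configuration, `MD s + 2 * LC s` is a lower bound on the number of moves of any
solution reaching the goal (identity) configuration. -/
theorem md_plus_2lc_admissible (b : Fin n × Fin n)
    (s : Equiv.Perm (Fin n × Fin n)) (k : ℕ) (f : ℕ → Equiv.Perm (Fin n × Fin n))
    (h0 : f 0 = s) (hk : f k = Equiv.refl _)
    (hmove : ∀ i < k, Move b (f i) (f (i + 1))) :
    MD b s + 2 * LC b s ≤ k := by
  have main : ∀ m i, i + m = k → MD b (f i) + 2 * LC b (f i) ≤ m := by
    intro m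
    induction m with
    | zero =>
      intro i hi
      have : f i = Equiv.refl _ := by rw [show i = k from by omega, hk]
      rw [this, MD_refl, LC_refl]
    | succ m ih =>
      intro i hi
      have h1 := step b (f i) (f (i + 1)) (hmove i (by omega))
      have h2 := ih (i + 1) (by omega)
      omega
  have := main k 0 (by omega)
  rwa [h0] at this
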